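/- Let $A$ be a commutative Noetherian local ring and $f: A^m \to A^n$ a map of finite free modules. Suppose that all $(m+1-k)\times(m+1-k)$ minors of $f$ vanish (the $k$-th vanishing locus is everything) and that the ideal of $(m-k)\times(m-k)$ minors is the unit ideal (the $(k+1)$-st vanishing locus is empty). Then the kernel of $f$ is a free direct summand of $A^m$ of rank $k$, and its formation commutes with arbitrary base change $A \to B$: the kernel of $f \otimes_A B$ equals $(\ker f) \otimes_A B$. -/

import Mathlib

/-- The ideal generated by all `s × s` minors of a matrix. -/
def minorsIdeal {A : Type*} [CommRing A] {n m : ℕ}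
    (M : Matrix (Fin n) (Fin m) A) (s : ℕ) : Ideal A :=
  Ideal.span { x | ∃ (ri : Fin s → Fin n) (ci : Fin s → Fin m),
    Function.Injective ri ∧ Function.Injective ci ∧ x = (M.submatrix ri ci).det }

open Matrix

lemma snoc_injective {α : Type*} {r : ℕ} {f : Fin r → α} {a : α}
    (hf : Function.Injective f) (ha : a ∉ Set.range f) :
    Function.Injective (Fin.snoc f a : Fin (r + 1) → α) := by
  intro p q hpq
  rcases Fin.eq_castSucc_or_eq_last p with ⟨i, rfl⟩ | rfl <;>
    rcases Fin.eq_castSucc_or_eq_last q with ⟨i', rfl⟩ | rfl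
  · simp only [Fin.snoc_castSucc] at hpq
    exact congrArg Fin.castSucc (hf hpq)
  · simp only [Fin.snoc_castSucc, Fin.snoc_last] at hpq
    exact absurd ⟨i, hpq⟩ ha
  · simp only [Fin.snoc_castSucc, Fin.snoc_last] at hpq
    exact absurd ⟨i', hpq.symm⟩ ha
  · rfl

/-- The candidate matrix whose columns span the kernel. -/
noncomputable def kerMat {B : Type} [CommRing B] {n m k r : ℕ} (M : Matrix (Fin n) (Fin m) B)
    (ri : Fin r → Fin n) (e : Fin r ⊕ Fin k ≃ Fin m) : Matrix (Fin m) (Fin k) B :=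
  (Matrix.fromRows
      (-((M.submatrix ri (e ∘ Sum.inl)).adjugate * M.submatrix ri (e ∘ Sum.inr)))
      ((M.submatrix ri (e ∘ Sum.inl)).det • (1 : Matrix (Fin k) (Fin k) B))).submatrix e.symm id

lemma kerMat_map {B C : Type} [CommRing B] [CommRing C] (φ : B →+* C) {n m k r : ℕ}
    (M : Matrix (Fin n) (Fin m) B) (ri : Fin r → Fin n) (e : Fin r ⊕ Fin k ≃ Fin m) :
    (kerMat M ri e).map φ = kerMat (M.map φ) ri e := by
  unfold kerMat
  have h1 : (M.map φ).submatrix ri (e ∘ Sum.inl) = (M.submatrix ri (e ∘ Sum.inl)).map φ := rfl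
  have h2 : (M.map φ).submatrix ri (e ∘ Sum.inr) = (M.submatrix ri (e ∘ Sum.inr)).map φ := rfl
  have hadj : ((M.submatrix ri (⇑e ∘ Sum.inl)).map φ).adjugate
      = (M.submatrix ri (⇑e ∘ Sum.inl)).adjugate.map φ := by
    simpa [RingHom.mapMatrix_apply] using (RingHom.map_adjugate φ (M.submatrix ri (⇑e ∘ Sum.inl))).symm
  have hdet : ((M.submatrix ri (⇑e ∘ Sum.inl)).map φ).det
      = φ (M.submatrix ri (⇑e ∘ Sum.inl)).det := by
    simpa [RingHom.mapMatrix_apply] using (RingHom.map_det φ (M.submatrix ri (⇑e ∘ Sum.inl))).symm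
  rw [h1, h2, hadj, hdet]
  ext p j
  rcases h : e.symm p with i | j' <;>
    simp only [Matrix.submatrix_apply, Matrix.map_apply, h, Matrix.fromRows_apply_inl, Matrix.fromRows_apply_inr] <;>
    simp [Matrix.submatrix_apply, Matrix.map_apply, h, Matrix.fromRows, Matrix.neg_apply,
      Matrix.mul_apply, map_sum, Matrix.smul_apply, smul_eq_mul, Matrix.one_apply, mul_ite,
      mul_one, mul_zero, apply_ite φ]

lemma key {B : Type} [CommRing B] {n m k r : ℕ} (M : Matrix (Fin n) (Fin m) B)
    (ri : Fin r → Fin n) (e : Fin r ⊕ Fin k ≃ Fin m) (hri : Function.Injective ri)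
    (hmin : ∀ (ri' : Fin (r + 1) → Fin n) (ci' : Fin (r + 1) → Fin m),
      Function.Injective ri' → Function.Injective ci' → (M.submatrix ri' ci').det = 0)
    (hd : IsUnit (M.submatrix ri (e ∘ Sum.inl)).det) :
    LinearMap.ker M.mulVecLin = LinearMap.range (kerMat M ri e).mulVecLin := by
  set Q := M.submatrix ri (e ∘ Sum.inl) with hQdef
  set R := M.submatrix ri (e ∘ Sum.inr) with hRdef
  set d := Q.det with hddef
  set X := Matrix.fromRows (-(Q.adjugate * R)) (d • (1 : Matrix (Fin k) (Fin k) B)) with hXdef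
  have hSdef : kerMat M ri e = X.submatrix e.symm id := rfl
  -- the submatrix of selected rows, as a column-partitioned matrix
  have hMe : M.submatrix ri ⇑e = Matrix.fromCols Q R := by
    ext i s
    cases s <;> rfl
  have hN : M.submatrix ri id = (Matrix.fromCols Q R).submatrix id ⇑e.symm := by
    rw [← hMe, Matrix.submatrix_submatrix]
    funext q
    simp
  have hNS : M.submatrix ri id * kerMat M ri e = 0 := by
    rw [hSdef, hN, Matrix.submatrix_mul_equiv, Matrix.fromCols_mul_fromRows,
      Matrix.mul_neg, ← Matrix.mul_assoc, Matrix.mul_adjugate, Matrix.smul_mul, Matrix.one_mul,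
      Matrix.mul_smul, Matrix.mul_one, ← hddef, neg_add_cancel, Matrix.submatrix_zero]
    rfl
  -- every row of `M` kills any vector killed by the selected rows
  have rowzero : ∀ (j : Fin n) (x : Fin m → B),
      (∀ i : Fin r, (fun c => M (ri i) c) ⬝ᵥ x = 0) → (fun c => M j c) ⬝ᵥ x = 0 := by
    intro j x hx
    set coeff : Fin (r + 1) → B := fun i =>
      (-1 : B) ^ ((i : ℕ) + r) * (M.submatrix (Fin.snoc ri j ∘ i.succAbove) (e ∘ Sum.inl)).det
      with hcoeff
    have hcl : coeff (Fin.last r) = d := by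
      have h1 : (Fin.snoc ri j ∘ (Fin.last r).succAbove : Fin r → Fin n) = ri := by
        funext q; simp [Fin.succAbove_last, Fin.snoc_castSucc]
      simp [hcoeff, h1, Fin.val_last, Even.neg_one_pow (⟨r, rfl⟩ : Even (r + r)), hddef, hQdef]
    have claim : ∀ c : Fin m, ∑ i : Fin (r + 1), coeff i * M ((Fin.snoc ri j : Fin (r + 1) → Fin n) i) c = 0 := by
      intro c
      have hT0 : (M.submatrix (Fin.snoc ri j) (Fin.snoc (⇑e ∘ Sum.inl) c)).det = 0 := by
        by_cases hjr : j ∈ Set.range ri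
        · obtain ⟨i0, hi0⟩ := hjr
          refine Matrix.det_zero_of_row_eq (i := i0.castSucc) (j := Fin.last r)
            (Fin.castSucc_lt_last i0).ne ?_
          funext q
          simp [Matrix.submatrix_apply, Fin.snoc_castSucc, Fin.snoc_last, hi0]
        · by_cases hcr : c ∈ Set.range (⇑e ∘ Sum.inl)
          · obtain ⟨i0, hi0⟩ := hcr
            refine Matrix.det_zero_of_column_eq (i := i0.castSucc) (j := Fin.last r)
              (Fin.castSucc_lt_last i0).ne ?_
            intro q
            simp only [Matrix.submatrix_apply, Fin.snoc_castSucc, Fin.snoc_last]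
            exact congrArg _ hi0
          · exact hmin _ _ (snoc_injective hri hjr)
              (snoc_injective (e.injective.comp Sum.inl_injective) hcr)
      have hsubm : ∀ i : Fin (r + 1),
          (M.submatrix (Fin.snoc ri j) (Fin.snoc (⇑e ∘ Sum.inl) c)).submatrix
            i.succAbove (Fin.last r).succAbove
          = M.submatrix (Fin.snoc ri j ∘ i.succAbove) (⇑e ∘ Sum.inl) := by
        intro i
        rw [Matrix.submatrix_submatrix]
        funext q
        simp [Fin.succAbove_last, Fin.snoc_castSucc]
      calc ∑ i : Fin (r + 1), coeff i * M ((Fin.snoc ri j : Fin (r + 1) → Fin n) i) c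
          = ∑ i : Fin (r + 1), (-1 : B) ^ ((i : ℕ) + (Fin.last r : ℕ))
              * (M.submatrix (Fin.snoc ri j) (Fin.snoc (⇑e ∘ Sum.inl) c)) i (Fin.last r)
              * ((M.submatrix (Fin.snoc ri j) (Fin.snoc (⇑e ∘ Sum.inl) c)).submatrix
                  i.succAbove (Fin.last r).succAbove).det := by
            refine Finset.sum_congr rfl fun i _ => ?_
            rw [hsubm i]
            simp only [Matrix.submatrix_apply, Fin.snoc_last, Fin.val_last, hcoeff]
            ring
        _ = (M.submatrix (Fin.snoc ri j) (Fin.snoc (⇑e ∘ Sum.inl) c)).det :=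
            (Matrix.det_succ_column _ _).symm
        _ = 0 := hT0
    have h0 : ∑ i : Fin (r + 1), coeff i * ((fun c => M ((Fin.snoc ri j : Fin (r + 1) → Fin n) i) c) ⬝ᵥ x) = 0 := by
      have hterm : ∀ i : Fin (r + 1), coeff i * ((fun c => M ((Fin.snoc ri j : Fin (r + 1) → Fin n) i) c) ⬝ᵥ x)
          = ∑ c, coeff i * M ((Fin.snoc ri j : Fin (r + 1) → Fin n) i) c * x c := by
        intro i
        simp only [dotProduct, Finset.mul_sum]
        exact Finset.sum_congr rfl fun c _ => (mul_assoc _ _ _).symm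
      rw [Finset.sum_congr rfl fun i _ => hterm i, Finset.sum_comm]
      refine Finset.sum_eq_zero fun c _ => ?_
      rw [← Finset.sum_mul, claim c, zero_mul]
    rw [Fin.sum_univ_castSucc] at h0
    have hl : ∀ i : Fin r, coeff i.castSucc * ((fun c => M ((Fin.snoc ri j : Fin (r + 1) → Fin n) i.castSucc) c) ⬝ᵥ x)
        = 0 := by
      intro i
      have hrw : (fun c => M ((Fin.snoc ri j : Fin (r + 1) → Fin n) i.castSucc) c) = fun c => M (ri i) c := by
        funext c; rw [Fin.snoc_castSucc]
      rw [hrw, hx i, mul_zero]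
    rw [Finset.sum_eq_zero (fun i _ => hl i), zero_add, hcl] at h0
    have hrw : (fun c => M ((Fin.snoc ri j : Fin (r + 1) → Fin n) (Fin.last r)) c) = fun c => M j c := by
      funext c; rw [Fin.snoc_last]
    rw [hrw] at h0
    exact (IsUnit.mul_right_eq_zero hd).mp h0
  ext x
  simp only [LinearMap.mem_ker, LinearMap.mem_range, Matrix.mulVecLin_apply]
  constructor
  · intro hx
    set xa : Fin r → B := fun i => x (e (Sum.inl i)) with hxa
    set xb : Fin k → B := fun j => x (e (Sum.inr j)) with hxb
    have hx' : Sum.elim xa xb = x ∘ ⇑e := by funext s; cases s <;> rfl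
    have hrow : Q *ᵥ xa + R *ᵥ xb = 0 := by
      have h : (M.submatrix ri id) *ᵥ x = 0 := by
        funext i
        exact congrFun hx (ri i)
      rw [hN, Matrix.submatrix_mulVec_equiv] at h
      simp only [Equiv.symm_symm] at h
      rw [← hx', Matrix.fromCols_mulVec_sumElim] at h
      funext i
      exact congrFun h i
    have hRb : R *ᵥ xb = -(Q *ᵥ xa) := by
      funext i
      have h2 := congrFun hrow i
      simp only [Pi.add_apply, Pi.zero_apply] at h2
      simpa [Pi.neg_apply] using eq_neg_of_add_eq_zero_right h2
    refine ⟨Ring.inverse d • xb, ?_⟩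
    have hXv : X *ᵥ (Ring.inverse d • xb) = Sum.elim xa xb := by
      have htop : (-(Q.adjugate * R)) *ᵥ (Ring.inverse d • xb) = xa := by
        rw [Matrix.neg_mulVec, Matrix.mulVec_smul, ← Matrix.mulVec_mulVec, hRb,
          Matrix.mulVec_neg, Matrix.mulVec_mulVec, Matrix.adjugate_mul, ← hddef,
          Matrix.smul_mulVec, Matrix.one_mulVec, smul_neg, neg_neg, smul_smul,
          Ring.inverse_mul_cancel _ hd, one_smul]
      have hbot : (d • (1 : Matrix (Fin k) (Fin k) B)) *ᵥ (Ring.inverse d • xb) = xb := by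
        rw [Matrix.smul_mulVec, Matrix.one_mulVec, smul_smul,
          Ring.mul_inverse_cancel _ hd, one_smul]
      rw [hXdef, Matrix.fromRows_mulVec, htop, hbot]
    have hcomp : kerMat M ri e *ᵥ (Ring.inverse d • xb) = (X *ᵥ (Ring.inverse d • xb)) ∘ ⇑e.symm :=
      rfl
    rw [hcomp, hXv, hx']
    funext p
    simp
  · rintro ⟨y, rfl⟩
    have hz : (M.submatrix ri id) *ᵥ (kerMat M ri e *ᵥ y) = 0 := by
      rw [Matrix.mulVec_mulVec, hNS, Matrix.zero_mulVec]
    funext j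
    exact rowzero j _ fun i => congrFun hz i

/-- second part of Proposition `pushforward-detl-subbundles`,
classical setting: over a Noetherian local ring, if all `(m+1-k)`-minors of
`f : A^m → A^n` vanish and the `(m-k)`-minors generate the unit ideal, then the
kernel of `f` is a free rank-`k` direct summand of `A^m` (given by a split
injection `S` with retraction `P`), and its formation commutes with arbitrary
base change `A → B`: the kernel of `f ⊗ B` is the image of `S ⊗ B`. -/
theorem stmt_10 (A : Type) [CommRing A] [IsNoetherianRing A] [IsLocalRing A]
    {n m k : ℕ} (M : Matrix (Fin n) (Fin m) A)
    (h1 : minorsIdeal M (m + 1 - k) = ⊥)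
    (h2 : minorsIdeal M (m - k) = ⊤) :
    ∃ (S : Matrix (Fin m) (Fin k) A) (P : Matrix (Fin k) (Fin m) A),
      P * S = 1 ∧
      ∀ (B : Type) [CommRing B] (φ : A →+* B),
        LinearMap.ker ((M.map φ).mulVecLin) = LinearMap.range ((S.map φ).mulVecLin) := by
  classical
  by_cases hkm : k ≤ m
  · -- main case
    have hmk1 : m + 1 - k = (m - k) + 1 := by omega
    rw [hmk1] at h1
    have hmin0 : ∀ (ri' : Fin (m - k + 1) → Fin n) (ci' : Fin (m - k + 1) → Fin m),
        Function.Injective ri' → Function.Injective ci' → (M.submatrix ri' ci').det = 0 := by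
      intro ri' ci' hri' hci'
      have hmem : (M.submatrix ri' ci').det ∈ minorsIdeal M (m - k + 1) :=
        Ideal.subset_span ⟨ri', ci', hri', hci', rfl⟩
      rw [h1] at hmem
      simpa using hmem
    -- find a unit minor of size m - k
    obtain ⟨ri, ci, hri, hci, hdu⟩ : ∃ (ri : Fin (m - k) → Fin n) (ci : Fin (m - k) → Fin m),
        Function.Injective ri ∧ Function.Injective ci ∧ IsUnit (M.submatrix ri ci).det := by
      by_contra hcon
      push_neg at hcon
      have hsub : { x | ∃ (ri : Fin (m - k) → Fin n) (ci : Fin (m - k) → Fin m),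
          Function.Injective ri ∧ Function.Injective ci ∧ x = (M.submatrix ri ci).det }
          ⊆ (IsLocalRing.maximalIdeal A : Set A) := by
        rintro x ⟨ri, ci, hri, hci, rfl⟩
        exact (IsLocalRing.mem_maximalIdeal _).mpr
          (mem_nonunits_iff.mpr (hcon ri ci hri hci))
      have hle : minorsIdeal M (m - k) ≤ IsLocalRing.maximalIdeal A :=
        Ideal.span_le.mpr hsub
      rw [h2] at hle
      exact (IsLocalRing.maximalIdeal.isMaximal A).ne_top (top_le_iff.mp hle)
    -- build the splitting equivalence
    have hcard : Fintype.card {x : Fin m // ¬ x ∈ Set.range ci} = k := by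
      rw [Fintype.card_subtype_compl]
      have hc1 : Fintype.card {x : Fin m // x ∈ Set.range ci} = m - k := by
        rw [Fintype.card_congr (Equiv.ofInjective ci hci).symm, Fintype.card_fin]
      rw [hc1, Fintype.card_fin]
      omega
    let e1 : {x : Fin m // ¬ x ∈ Set.range ci} ≃ Fin k := Fintype.equivFinOfCardEq hcard
    let e : (Fin (m - k)) ⊕ (Fin k) ≃ Fin m :=
      (Equiv.sumCongr (Equiv.ofInjective ci hci) e1.symm).trans
        (Equiv.sumCompl (· ∈ Set.range ci))
    have he : ⇑e ∘ Sum.inl = ci := by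
      funext i
      simp [e, Equiv.sumCompl_apply_inl]
    have hd : IsUnit (M.submatrix ri (⇑e ∘ Sum.inl)).det := by rw [he]; exact hdu
    set d := (M.submatrix ri (⇑e ∘ Sum.inl)).det with hddef
    -- the retraction
    refine ⟨kerMat M ri e,
      (Matrix.fromCols (0 : Matrix (Fin k) (Fin (m - k)) A)
        (Ring.inverse d • (1 : Matrix (Fin k) (Fin k) A))).submatrix id ⇑e.symm, ?_, ?_⟩
    · have hk : kerMat M ri e = (Matrix.fromRows
          (-((M.submatrix ri (⇑e ∘ Sum.inl)).adjugate * M.submatrix ri (⇑e ∘ Sum.inr)))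
          (d • (1 : Matrix (Fin k) (Fin k) A))).submatrix ⇑e.symm id := rfl
      rw [hk, Matrix.submatrix_mul_equiv, Matrix.fromCols_mul_fromRows]
      rw [Matrix.zero_mul, smul_mul_assoc, Matrix.one_mul, smul_smul,
        Ring.inverse_mul_cancel _ hd, one_smul, zero_add, Matrix.submatrix_id_id]
    · intro B _ φ
      rw [kerMat_map]
      refine key (M.map φ) ri e hri ?_ ?_
      · intro ri' ci' hri' hci'
        have hh : ((M.submatrix ri' ci').map φ).det = φ (M.submatrix ri' ci').det := by
          simpa [RingHom.mapMatrix_apply] using (RingHom.map_det φ (M.submatrix ri' ci')).symm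
        have h3 : (M.map φ).submatrix ri' ci' = (M.submatrix ri' ci').map φ := rfl
        rw [h3, hh, hmin0 ri' ci' hri' hci', map_zero]
      · have hh : ((M.submatrix ri (⇑e ∘ Sum.inl)).map φ).det
            = φ (M.submatrix ri (⇑e ∘ Sum.inl)).det := by
          simpa [RingHom.mapMatrix_apply]
            using (RingHom.map_det φ (M.submatrix ri (⇑e ∘ Sum.inl))).symm
        have h3 : (M.map φ).submatrix ri (⇑e ∘ Sum.inl)
            = (M.submatrix ri (⇑e ∘ Sum.inl)).map φ := rfl
        rw [h3, hh, ← hddef]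
        exact hd.map φ
  · -- degenerate case: the ring is trivial
    have hmk : m + 1 - k = 0 := by omega
    have h10 : (1 : A) = 0 := by
      have hmem : (1 : A) ∈ minorsIdeal M (m + 1 - k) := by
        rw [hmk]
        exact Ideal.subset_span
          ⟨Fin.elim0, Fin.elim0, fun a => a.elim0, fun a => a.elim0, Matrix.det_fin_zero.symm⟩
      rw [h1] at hmem
      simpa using hmem
    haveI : Subsingleton A := subsingleton_of_zero_eq_one h10.symm
    refine ⟨0, 0, Subsingleton.elim _ _, ?_⟩
    intro B _ φ
    haveI : Subsingleton B := by
      have : (0 : B) = 1 := by rw [← map_one φ, h10, map_zero]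
      exact subsingleton_of_zero_eq_one this
    ext x
    constructor
    · intro _
      exact ⟨0, Subsingleton.elim _ _⟩
    · intro _
      exact Subsingleton.elim _ _
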